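/- arXiv:1811.08962 — 3 statements merged into one kernel-verified Lean document; each statement's English description precedes it below -/
import Mathlib

section
/- Suppose the box ∏_{i=1}^n [y_i, y_i+γ_i] is the union of finitely many boxes P₁, …, Pₘ, each belonging to 𝒫ₙ*. Then for any index k ∈ {1, …, n} and any 0 < ε < γ_k, there exist boxes Q₁, …, Qₘ, each belonging to 𝒫ₙ, whose union equals (∏_{i=1}^{k−1} [y_i, y_i+γ_i]) × [y_k+ε, y_k+γ_k] × (∏_{i=k+1}^{n} [y_i, y_i+γ_i]). -/
open scoped BigOperators

/-- `S` is a box of the family `𝒫ₙ`: an axis-parallel parallelotope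
`∏ᵢ [xᵢ, xᵢ + δᵢ]` with `δᵢ ≥ 0` and `∑ᵢ δᵢ < 1`. -/
def IsBoxP (n : ℕ) (S : Set (EuclideanSpace ℝ (Fin n))) : Prop :=
  ∃ x δ : Fin n → ℝ, (∀ i, 0 ≤ δ i) ∧ (∑ i, δ i) < 1 ∧
    S = {p : EuclideanSpace ℝ (Fin n) | ∀ i, p i ∈ Set.Icc (x i) (x i + δ i)}

/-- `S` is a box of the family `𝒫ₙ*`: an axis-parallel parallelotope
`∏ᵢ [xᵢ, xᵢ + δᵢ]` with `δᵢ ≥ 0` and `∑ᵢ δᵢ ≤ 1`. -/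
def IsBoxPStar (n : ℕ) (S : Set (EuclideanSpace ℝ (Fin n))) : Prop :=
  ∃ x δ : Fin n → ℝ, (∀ i, 0 ≤ δ i) ∧ (∑ i, δ i) ≤ 1 ∧
    S = {p : EuclideanSpace ℝ (Fin n) | ∀ i, p i ∈ Set.Icc (x i) (x i + δ i)}

theorem compression_lemma (n m : ℕ) (y γ : Fin n → ℝ) (hγ : ∀ i, 0 ≤ γ i)
    (P : Fin m → Set (EuclideanSpace ℝ (Fin n)))
    (hP : ∀ i, IsBoxPStar n (P i))
    (hunion : {p : EuclideanSpace ℝ (Fin n) | ∀ i, p i ∈ Set.Icc (y i) (y i + γ i)} = ⋃ i, P i)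
    (k : Fin n) (ε : ℝ) (hε : 0 < ε) (hεγ : ε < γ k) :
    ∃ Q : Fin m → Set (EuclideanSpace ℝ (Fin n)),
      (∀ i, IsBoxP n (Q i)) ∧
      (⋃ i, Q i) = {p : EuclideanSpace ℝ (Fin n) |
        ∀ i, p i ∈ Set.Icc (if i = k then y k + ε else y i) (y i + γ i)} := by
  classical
  have hγk : 0 < γ k := hε.trans hεγ
  have hden : 0 < γ k - ε / 2 := by linarith
  have hnum : 0 < γ k - ε := by linarith
  set c : ℝ := y k + ε with hc_def
  set c' : ℝ := y k + ε / 2 with hc'_def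
  set lam : ℝ := (γ k - ε) / (γ k - ε / 2) with hlam_def
  have hlam0 : 0 < lam := div_pos hnum hden
  have hlam1 : lam < 1 := (div_lt_one hden).2 (by linarith)
  have hlam_mul : lam * (γ k - ε / 2) = γ k - ε := div_mul_cancel₀ _ hden.ne'
  clear_value c c' lam
  choose X Δ hΔ0 hΔsum hPeq using hP
  -- corner facts: each P i sits inside the big box
  have hcorner : ∀ i j, y j ≤ X i j ∧ X i j + Δ i j ≤ y j + γ j := by
    intro i j
    have hlow : (WithLp.toLp 2 (X i) : EuclideanSpace ℝ (Fin n)) ∈ P i := by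
      rw [hPeq i]
      intro j'
      exact ⟨le_refl _, le_add_of_nonneg_right (hΔ0 i j')⟩
    have hup : (WithLp.toLp 2 ((fun j' => X i j' + Δ i j') : Fin n → ℝ) : EuclideanSpace ℝ (Fin n)) ∈ P i := by
      rw [hPeq i]
      intro j'
      exact ⟨le_add_of_nonneg_right (hΔ0 i j'), le_refl _⟩
    have hlow' : (WithLp.toLp 2 (X i) : EuclideanSpace ℝ (Fin n)) ∈
        {p : EuclideanSpace ℝ (Fin n) | ∀ i, p i ∈ Set.Icc (y i) (y i + γ i)} := by
      rw [hunion]; exact Set.mem_iUnion.2 ⟨i, hlow⟩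
    have hup' : (WithLp.toLp 2 ((fun j' => X i j' + Δ i j') : Fin n → ℝ) : EuclideanSpace ℝ (Fin n)) ∈
        {p : EuclideanSpace ℝ (Fin n) | ∀ i, p i ∈ Set.Icc (y i) (y i + γ i)} := by
      rw [hunion]; exact Set.mem_iUnion.2 ⟨i, hup⟩
    exact ⟨(hlow' j).1, (hup' j).2⟩
  -- key: every point of the big box lies in some box nondegenerate in direction k
  have main : ∀ (p : EuclideanSpace ℝ (Fin n)) (t : ℝ), y k ≤ p k + t → p k + t ≤ y k + γ k →
      (∀ j, j ≠ k → p j ∈ Set.Icc (y j) (y j + γ j)) →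
      ∃ i, ∀ j, (if j = k then p k + t else p j) ∈ Set.Icc (X i j) (X i j + Δ i j) := by
    intro p t h1 h2 h3
    have hmem : (WithLp.toLp 2 ((fun j => if j = k then p k + t else p j) : Fin n → ℝ) :
        EuclideanSpace ℝ (Fin n)) ∈
        {p : EuclideanSpace ℝ (Fin n) | ∀ i, p i ∈ Set.Icc (y i) (y i + γ i)} := by
      intro j
      by_cases hj : j = k
      · subst hj; simpa using ⟨h1, h2⟩
      · simpa [hj] using h3 j hj
    rw [hunion] at hmem
    obtain ⟨i, hi⟩ := Set.mem_iUnion.1 hmem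
    rw [hPeq i] at hi
    exact ⟨i, hi⟩
  have key : ∀ p : EuclideanSpace ℝ (Fin n),
      (∀ j, p j ∈ Set.Icc (y j) (y j + γ j)) →
      ∃ i, (∀ j, p j ∈ Set.Icc (X i j) (X i j + Δ i j)) ∧ 0 < Δ i k := by
    intro p hp
    rcases lt_or_eq_of_le (hp k).2 with hlt | heq
    · -- p k < y k + γ k : approach from above
      set d : ℝ := y k + γ k - p k with hd_def
      have hd : 0 < d := by linarith
      have hts : ∀ s : ℕ, 0 < d / ((s : ℝ) + 2) ∧ d / ((s : ℝ) + 2) ≤ d := by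
        intro s
        have h2 : (1 : ℝ) ≤ (s : ℝ) + 2 := by
          have : (0:ℝ) ≤ (s:ℝ) := Nat.cast_nonneg s
          linarith
        exact ⟨div_pos hd (by linarith), div_le_self hd.le h2⟩
      choose f hf using fun s : ℕ =>
        main p (d / ((s : ℝ) + 2)) (by linarith [(hp k).1, (hts s).1])
          (by linarith [(hts s).2]) (fun j _ => hp j)
      obtain ⟨i, hinf⟩ := Finite.exists_infinite_fiber f
      have hinf' : (f ⁻¹' {i}).Infinite := Set.infinite_coe_iff.mp hinf
      obtain ⟨s₀, hs₀⟩ := hinf'.nonempty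
      have hs₀' : f s₀ = i := hs₀
      have hXle : X i k ≤ p k := by
        refine le_of_forall_pos_le_add ?_
        intro η hη
        obtain ⟨N, hN⟩ := exists_nat_gt (d / η)
        obtain ⟨s, hsmem, hNs⟩ := Set.Infinite.exists_gt hinf' N
        have hs : f s = i := hsmem
        have hk := (hf s) k
        rw [if_pos rfl, hs] at hk
        have hbound : d / ((s : ℝ) + 2) < η := by
          rw [div_lt_iff₀ (by positivity)]
          have : d / η < (s : ℝ) + 2 := by
            have : (N : ℝ) < (s : ℝ) + 2 := by
              have := (Nat.cast_lt (α := ℝ)).2 hNs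
              linarith
            linarith
          calc d = η * (d / η) := by field_simp
            _ < η * ((s : ℝ) + 2) := by
              exact mul_lt_mul_of_pos_left this hη
        linarith [hk.1]
      have hk₀ := (hf s₀) k
      rw [if_pos rfl, hs₀'] at hk₀
      refine ⟨i, fun j => ?_, ?_⟩
      · by_cases hj : j = k
        · subst hj
          exact ⟨hXle, by linarith [hk₀.2, (hts s₀).1]⟩
        · have := (hf s₀) j
          rw [if_neg hj, hs₀'] at this
          exact this
      · linarith [hk₀.2, (hts s₀).1]
    · -- p k = y k + γ k : approach from below
      have hts : ∀ s : ℕ, 0 < γ k / ((s : ℝ) + 2) ∧ γ k / ((s : ℝ) + 2) ≤ γ k := by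
        intro s
        have h2 : (1 : ℝ) ≤ (s : ℝ) + 2 := by
          have : (0:ℝ) ≤ (s:ℝ) := Nat.cast_nonneg s
          linarith
        exact ⟨div_pos hγk (by linarith), div_le_self hγk.le h2⟩
      choose f hf using fun s : ℕ =>
        main p (-(γ k / ((s : ℝ) + 2))) (by linarith [(hts s).2]) (by linarith [(hts s).1])
          (fun j _ => hp j)
      obtain ⟨i, hinf⟩ := Finite.exists_infinite_fiber f
      have hinf' : (f ⁻¹' {i}).Infinite := Set.infinite_coe_iff.mp hinf
      obtain ⟨s₀, hs₀⟩ := hinf'.nonempty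
      have hs₀' : f s₀ = i := hs₀
      have hk₀ := (hf s₀) k
      rw [if_pos rfl, hs₀'] at hk₀
      have hXup : p k ≤ X i k + Δ i k := by
        refine le_of_forall_pos_le_add ?_
        intro η hη
        obtain ⟨N, hN⟩ := exists_nat_gt (γ k / η)
        obtain ⟨s, hsmem, hNs⟩ := Set.Infinite.exists_gt hinf' N
        have hs : f s = i := hsmem
        have hk := (hf s) k
        rw [if_pos rfl, hs] at hk
        have hbound : γ k / ((s : ℝ) + 2) < η := by
          rw [div_lt_iff₀ (by positivity)]
          have : γ k / η < (s : ℝ) + 2 := by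
            have : (N : ℝ) < (s : ℝ) + 2 := by
              have := (Nat.cast_lt (α := ℝ)).2 hNs
              linarith
            linarith
          calc γ k = η * (γ k / η) := by field_simp
            _ < η * ((s : ℝ) + 2) := mul_lt_mul_of_pos_left this hη
        linarith [hk.2]
      refine ⟨i, fun j => ?_, ?_⟩
      · by_cases hj : j = k
        · subst hj
          exact ⟨by linarith [hk₀.1, (hts s₀).1], hXup⟩
        · have := (hf s₀) j
          rw [if_neg hj, hs₀'] at this
          exact this
      · linarith [hk₀.1, (hts s₀).1]
  -- definition of the compressed boxes
  set xQ : Fin m → Fin n → ℝ := fun i j =>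
    if 0 < Δ i k then
      (if j = k then c + lam * (max (X i k) c' - c') else X i j)
    else (if j = k then c else y j) with hxQ_def
  set dQ : Fin m → Fin n → ℝ := fun i j =>
    if 0 < Δ i k then
      (if j = k then lam * max 0 (X i k + Δ i k - max (X i k) c') else Δ i j)
    else 0 with hdQ_def
  refine ⟨fun i => {p : EuclideanSpace ℝ (Fin n) | ∀ j, p j ∈ Set.Icc (xQ i j) (xQ i j + dQ i j)},
    fun i => ⟨xQ i, dQ i, ?_, ?_, rfl⟩, ?_⟩
  · -- nonnegativity
    intro j
    by_cases hi : 0 < Δ i k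
    · by_cases hj : j = k
      · simp only [hdQ_def, if_pos hi, if_pos hj]
        exact mul_nonneg hlam0.le (le_max_left _ _)
      · simp only [hdQ_def, if_pos hi, if_neg hj]
        exact hΔ0 i j
    · simp [hdQ_def, hi]
  · -- sum < 1
    by_cases hi : 0 < Δ i k
    · have hM : max 0 (X i k + Δ i k - max (X i k) c') ≤ Δ i k := by
        apply max_le hi.le
        have := le_max_left (X i k) c'
        linarith
      have hkey : dQ i k < Δ i k := by
        simp only [hdQ_def, if_pos hi, if_pos rfl]
        calc lam * max 0 (X i k + Δ i k - max (X i k) c') ≤ lam * Δ i k :=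
              mul_le_mul_of_nonneg_left hM hlam0.le
          _ < 1 * Δ i k := mul_lt_mul_of_pos_right hlam1 hi
          _ = Δ i k := one_mul _
      have hsum1 : ∑ j, dQ i j = dQ i k + ∑ j ∈ Finset.univ.erase k, dQ i j :=
        (Finset.add_sum_erase _ _ (Finset.mem_univ k)).symm
      have hsum2 : ∑ j, Δ i j = Δ i k + ∑ j ∈ Finset.univ.erase k, Δ i j :=
        (Finset.add_sum_erase _ _ (Finset.mem_univ k)).symm
      have hsame : ∑ j ∈ Finset.univ.erase k, dQ i j = ∑ j ∈ Finset.univ.erase k, Δ i j := by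
        apply Finset.sum_congr rfl
        intro j hj
        have hj' : j ≠ k := Finset.ne_of_mem_erase hj
        simp [hdQ_def, hi, hj']
      have := hΔsum i
      linarith
    · have : ∀ j, dQ i j = 0 := by intro j; simp [hdQ_def, hi]
      rw [Finset.sum_congr rfl (fun j _ => this j), Finset.sum_const_zero]
      norm_num
  · -- the union equality
    ext q
    simp only [Set.mem_iUnion, Set.mem_setOf_eq]
    constructor
    · rintro ⟨i, hq⟩
      intro j
      by_cases hi : 0 < Δ i k
      · by_cases hj : j = k
        · rw [hj, if_pos rfl]
          have hqk := hq k
          simp only [hxQ_def, hdQ_def, if_pos hi, eq_self_iff_true, if_true] at hqk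
          have hmax1 : c' ≤ max (X i k) c' := le_max_right _ _
          have hmax2 : max (X i k) c' ≤ y k + γ k := by
            apply max_le
            · linarith [(hcorner i k).2, hΔ0 i k]
            · linarith [hc'_def]
          have hM : max (X i k) c' - c' + max 0 (X i k + Δ i k - max (X i k) c')
              ≤ γ k - ε / 2 := by
            rcases le_total (X i k + Δ i k - max (X i k) c') 0 with h | h
            · rw [max_eq_left h]
              linarith [hc'_def, hmax2]
            · rw [max_eq_right h]
              linarith [hc'_def, (hcorner i k).2]
          have h3 : lam * (max (X i k) c' - c' + max 0 (X i k + Δ i k - max (X i k) c'))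
              ≤ lam * (γ k - ε / 2) := mul_le_mul_of_nonneg_left hM hlam0.le
          rw [mul_add] at h3
          have h0 : 0 ≤ lam * (max (X i k) c' - c') :=
            mul_nonneg hlam0.le (by linarith)
          constructor
          · linarith [hqk.1, hc_def, h0]
          · have h4 := hqk.2
            have h4' : q k ≤ c + lam * (max (X i k) c' - c') + lam * max 0 (X i k + Δ i k - max (X i k) c') := h4
            have h5 : lam * (γ k - ε / 2) = γ k - ε := hlam_mul
            linarith [h4', h5, h3, hc_def]
        · have hqj := hq j
          simp only [hxQ_def, hdQ_def, if_pos hi, if_neg hj] at hqj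
          rw [if_neg hj]
          exact ⟨(hcorner i j).1.trans hqj.1, hqj.2.trans (hcorner i j).2⟩
      · have hqj := hq j
        simp only [hxQ_def, hdQ_def, if_neg hi, add_zero] at hqj
        by_cases hj : j = k
        · rw [hj, if_pos rfl]
          rw [hj, if_pos rfl] at hqj
          have hqc : q k = c := le_antisymm hqj.2 hqj.1
          constructor
          · rw [hqc]
          · rw [hqc]; linarith [hc_def]
        · rw [if_neg hj]
          rw [if_neg hj] at hqj
          have hqy : q j = y j := le_antisymm hqj.2 hqj.1
          rw [hqy]
          exact ⟨le_refl _, by linarith [hγ j]⟩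
    · intro hq
      -- decompress q
      set p : EuclideanSpace ℝ (Fin n) :=
        (WithLp.toLp 2 (fun j => if j = k then c' + (q k - c) / lam else q j : Fin n → ℝ) :
          EuclideanSpace ℝ (Fin n)) with hp_def
      have hqk := hq k
      rw [if_pos rfl] at hqk
      have hpk : p k = c' + (q k - c) / lam := by rw [hp_def]; simp
      have hpj : ∀ j, j ≠ k → p j = q j := by intro j hj; rw [hp_def]; simp [hj]
      have hpbig : ∀ j, p j ∈ Set.Icc (y j) (y j + γ j) := by
        intro j
        by_cases hj : j = k
        · rw [hj, hpk]
          constructor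
          · have : 0 ≤ (q k - c) / lam := div_nonneg (by linarith [hqk.1]) hlam0.le
            linarith [hc'_def]
          · have h1 : q k - c ≤ γ k - ε := by linarith [hqk.2, hc_def]
            have h2 : (q k - c) / lam ≤ γ k - ε / 2 := by
              rw [div_le_iff₀ hlam0]
              calc q k - c ≤ γ k - ε := h1
                _ = lam * (γ k - ε / 2) := hlam_mul.symm
                _ = (γ k - ε / 2) * lam := mul_comm _ _
            linarith [hc'_def]
        · rw [hpj j hj]
          have := hq j
          rw [if_neg hj] at this
          exact this
      obtain ⟨i, hpi, hpos⟩ := key p hpbig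
      refine ⟨i, fun j => ?_⟩
      by_cases hj : j = k
      · rw [hj]
        simp only [hxQ_def, hdQ_def, if_pos hpos, eq_self_iff_true, if_true]
        have hqc : q k - c = lam * (p k - c') := by
          rw [hpk]; field_simp; ring
        have hc'pk : c' ≤ p k := by
          rw [hpk]
          have : 0 ≤ (q k - c) / lam := div_nonneg (by linarith [hqk.1]) hlam0.le
          linarith
        have hmaxle : max (X i k) c' ≤ p k := max_le (hpi k).1 hc'pk
        constructor
        · have : lam * (max (X i k) c' - c') ≤ lam * (p k - c') :=
            mul_le_mul_of_nonneg_left (by linarith) hlam0.le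
          linarith
        · have hup : p k - max (X i k) c' ≤ max 0 (X i k + Δ i k - max (X i k) c') := by
            apply le_trans _ (le_max_right _ _)
            linarith [(hpi k).2]
          have : lam * (p k - c') ≤ lam * (max (X i k) c' - c') +
              lam * max 0 (X i k + Δ i k - max (X i k) c') := by
            rw [← mul_add]
            exact mul_le_mul_of_nonneg_left (by linarith) hlam0.le
          linarith
      · simp only [hxQ_def, hdQ_def, if_pos hpos, if_neg hj]
        rw [← hpj j hj]
        exact hpi j
end

section
/- The 2-skeleton B_{2,4} of the unit cube [0,1]⁴ can be covered by 88 boxes belonging to 𝒫₄*, and moreover these 88 boxes can be chosen so that no two of them have overlapping interiors (the interiors, taken within ℝ⁴, of any two distinct boxes of the cover are disjoint). -/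
open scoped BigOperators

/-- The `(n-2)`-skeleton `B_{n-2,n}` of the unit cube `[0,1]ⁿ`: points of the cube
having at least two coordinates equal to `0` or `1`. -/
def skeletonTwo (n : ℕ) : Set (EuclideanSpace ℝ (Fin n)) :=
  {p | (∀ i, p i ∈ Set.Icc (0 : ℝ) 1) ∧
    ∃ i j : Fin n, i ≠ j ∧ (p i = 0 ∨ p i = 1) ∧ (p j = 0 ∨ p j = 1)}

namespace Skel88

abbrev Pt := EuclideanSpace ℝ (Fin 4)

def box (x δ : Fin 4 → ℝ) : Set Pt := {p : Pt | ∀ i, p i ∈ Set.Icc (x i) (x i + δ i)}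

noncomputable def sideL (b : Bool) : ℝ := if b then 3/4 else 0
noncomputable def ptL (b : Bool) : ℝ := if b then 1 else 0
noncomputable def halfL (b : Bool) : ℝ := if b then 1/2 else 0

/-- Index type for the 88 boxes: 16 vertex boxes, 48 face-center boxes,
24 edge boxes. -/
abbrev Idx := (Fin 4 → Bool) ⊕ (Fin 6 × Bool × Bool × Bool) ⊕ (Fin 3 × Bool × Bool × Bool)

/-- Lower corners of the center boxes; the six rows correspond to the six
"arrows" (d,c): (0,1),(1,2),(2,0),(0,3),(1,3),(2,3). -/
noncomputable def centX (e1 e2 h : Bool) : Fin 6 → Fin 4 → ℝ :=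
  ![![halfL h, 1/4, ptL e1, ptL e2],
    ![ptL e1, halfL h, 1/4, ptL e2],
    ![1/4, ptL e1, halfL h, ptL e2],
    ![halfL h, ptL e1, ptL e2, 1/4],
    ![ptL e1, halfL h, ptL e2, 1/4],
    ![ptL e1, ptL e2, halfL h, 1/4]]

noncomputable def centD : Fin 6 → Fin 4 → ℝ :=
  ![![1/2,1/2,0,0], ![0,1/2,1/2,0], ![1/2,0,1/2,0],
    ![1/2,0,0,1/2], ![0,1/2,0,1/2], ![0,0,1/2,1/2]]

/-- Lower corners of the edge boxes; the three rows correspond to edges with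
free coordinate m = 0,1,2; `O(0)={1,3}`, `O(1)={2,3}`, `O(2)={0,3}`. -/
noncomputable def edgeX (e1 e2 e3 : Bool) : Fin 3 → Fin 4 → ℝ :=
  ![![1/4, sideL e1, ptL e2, sideL e3],
    ![ptL e1, 1/4, sideL e2, sideL e3],
    ![sideL e1, ptL e2, 1/4, sideL e3]]

noncomputable def edgeD : Fin 3 → Fin 4 → ℝ :=
  ![![1/2,1/4,0,1/4], ![0,1/2,1/4,1/4], ![1/4,0,1/2,1/4]]

noncomputable def bx : Idx → (Fin 4 → ℝ)
  | .inl v => fun i => sideL (v i)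
  | .inr (.inl (a, e1, e2, h)) => centX e1 e2 h a
  | .inr (.inr (m, e1, e2, e3)) => edgeX e1 e2 e3 m

noncomputable def bd : Idx → (Fin 4 → ℝ)
  | .inl _ => fun _ => 1/4
  | .inr (.inl (a, _, _, _)) => centD a
  | .inr (.inr (m, _, _, _)) => edgeD m

noncomputable def B (idx : Idx) : Set Pt := box (bx idx) (bd idx)

lemma mem_B_of {p : Pt} (idx : Idx)
    (h0 : bx idx 0 ≤ p 0 ∧ p 0 ≤ bx idx 0 + bd idx 0)
    (h1 : bx idx 1 ≤ p 1 ∧ p 1 ≤ bx idx 1 + bd idx 1)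
    (h2 : bx idx 2 ≤ p 2 ∧ p 2 ≤ bx idx 2 + bd idx 2)
    (h3 : bx idx 3 ≤ p 3 ∧ p 3 ≤ bx idx 3 + bd idx 3) :
    p ∈ B idx := by
  intro i; fin_cases i
  exacts [h0, h1, h2, h3]

lemma isBoxPStar_B (idx : Idx) : IsBoxPStar 4 (B idx) := by
  refine ⟨bx idx, bd idx, ?_, ?_, rfl⟩ <;>
  · rcases idx with v | ⟨a, e1, e2, h⟩ | ⟨m, e1, e2, e3⟩
    · first
      | (intro i; norm_num [bd])
      | (norm_num [bd, Fin.sum_univ_four])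
    · fin_cases a <;>
        first
        | (intro i; fin_cases i <;> norm_num [bd, centD])
        | (norm_num [bd, centD, Fin.sum_univ_four, Matrix.cons_val_two, Matrix.cons_val_three, Matrix.tail_cons, Matrix.head_cons])
    · fin_cases m <;>
        first
        | (intro i; fin_cases i <;> norm_num [bd, edgeD])
        | (norm_num [bd, edgeD, Fin.sum_univ_four, Matrix.cons_val_two, Matrix.cons_val_three, Matrix.tail_cons, Matrix.head_cons])

/- ### Interiors -/

lemma hyperplane_interior (r : Fin 4) (c : ℝ) : interior {p : Pt | p r = c} = ∅ := by
  rw [Set.eq_empty_iff_forall_notMem]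
  intro q hq
  rw [mem_interior_iff_mem_nhds, Metric.mem_nhds_iff] at hq
  obtain ⟨ε, hε, hball⟩ := hq
  have h1 : q ∈ {p : Pt | p r = c} := hball (Metric.mem_ball_self hε)
  have h2 : (q + (ε/2) • EuclideanSpace.single r (1:ℝ)) ∈ {p : Pt | p r = c} := by
    apply hball
    rw [Metric.mem_ball, dist_eq_norm]
    have h3 : q + (ε/2) • EuclideanSpace.single r (1:ℝ) - q
        = (ε/2) • EuclideanSpace.single r (1:ℝ) := by abel
    rw [h3, norm_smul, EuclideanSpace.norm_single]
    simp [abs_of_pos hε]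
    linarith
  simp only [Set.mem_setOf_eq] at h1 h2
  have h3 : (q + (ε/2) • EuclideanSpace.single r (1:ℝ)) r = q r + ε/2 := by
    simp [EuclideanSpace.single_apply]
  rw [h3, h1] at h2
  linarith

lemma interior_box_empty (x δ : Fin 4 → ℝ) (r : Fin 4) (h : δ r = 0) :
    interior (box x δ) = ∅ := by
  have hsub : box x δ ⊆ {p : Pt | p r = x r} := by
    intro p hp
    have h1 := (hp r).1
    have h2 := (hp r).2
    rw [h] at h2
    simp only [add_zero] at h2
    exact le_antisymm h2 h1
  have h4 := interior_mono hsub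
  rw [hyperplane_interior r (x r)] at h4
  exact Set.eq_empty_iff_forall_notMem.2 fun q hq => (h4 hq).elim

lemma interior_B_inr (w : (Fin 6 × Bool × Bool × Bool) ⊕ (Fin 3 × Bool × Bool × Bool)) :
    interior (B (.inr w)) = ∅ := by
  rcases w with ⟨a, e1, e2, h⟩ | ⟨m, e1, e2, e3⟩
  · fin_cases a
    · exact interior_box_empty _ _ 2 (by norm_num [bd, centD, Matrix.cons_val_two, Matrix.cons_val_three, Matrix.tail_cons, Matrix.head_cons])
    · exact interior_box_empty _ _ 0 (by norm_num [bd, centD])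
    · exact interior_box_empty _ _ 1 (by norm_num [bd, centD])
    · exact interior_box_empty _ _ 1 (by norm_num [bd, centD])
    · exact interior_box_empty _ _ 0 (by norm_num [bd, centD])
    · exact interior_box_empty _ _ 0 (by norm_num [bd, centD])
  · fin_cases m
    · exact interior_box_empty _ _ 2 (by norm_num [bd, edgeD, Matrix.cons_val_two, Matrix.cons_val_three, Matrix.tail_cons, Matrix.head_cons])
    · exact interior_box_empty _ _ 0 (by norm_num [bd, edgeD])
    · exact interior_box_empty _ _ 1 (by norm_num [bd, edgeD])

lemma vert_disjoint (v w : Fin 4 → Bool) (hvw : v ≠ w) :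
    B (.inl v) ∩ B (.inl w) = ∅ := by
  rw [Set.eq_empty_iff_forall_notMem]
  rintro p ⟨hp1, hp2⟩
  obtain ⟨r, hr⟩ : ∃ r, v r ≠ w r := by
    by_contra hc
    push_neg at hc
    exact hvw (funext hc)
  have a1 := (hp1 r).1
  have a2 := (hp1 r).2
  have b1 := (hp2 r).1
  have b2 := (hp2 r).2
  simp only [bx, bd] at a1 a2 b1 b2
  cases hv : v r <;> cases hw : w r <;>
      simp only [sideL, hv, hw, if_true, if_false, Bool.true_eq_false, Bool.false_eq_true,
        ne_eq, not_true_eq_false, not_false_eq_true] at a1 a2 b1 b2 hr <;>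
    linarith

/- ### Helpers for the covering -/

lemma pt_of {u : ℝ} (h : u = 0 ∨ u = 1) : ∃ b, u = ptL b := by
  rcases h with h | h
  · exact ⟨false, by simp [ptL, h]⟩
  · exact ⟨true, by simp [ptL, h]⟩

lemma pt_in_quarter (b : Bool) : sideL b ≤ ptL b ∧ ptL b ≤ sideL b + 1/4 := by
  cases b <;> norm_num [sideL, ptL]

lemma quarter_of {u : ℝ} (h0 : 0 ≤ u) (h1 : u ≤ 1) (h : ¬(1/4 ≤ u ∧ u ≤ 3/4)) :
    ∃ b, sideL b ≤ u ∧ u ≤ sideL b + 1/4 := by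
  rcases not_and_or.1 h with h | h <;> push_neg at h
  · exact ⟨false, by constructor <;> simp [sideL] <;> linarith⟩
  · exact ⟨true, by constructor <;> simp [sideL] <;> linarith⟩

lemma half_of {u : ℝ} (h0 : 0 ≤ u) (h1 : u ≤ 1) :
    ∃ b, halfL b ≤ u ∧ u ≤ halfL b + 1/2 := by
  by_cases h : u ≤ 1/2
  · exact ⟨false, by constructor <;> simp [halfL] <;> linarith⟩
  · exact ⟨true, by constructor <;> simp [halfL] <;> linarith⟩

lemma vec6_four {α : Type*} (a b c d e f : α) : ![a,b,c,d,e,f] 4 = e := rfl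
lemma vec6_five {α : Type*} (a b c d e f : α) : ![a,b,c,d,e,f] 5 = f := rfl

lemma cover23 (p : Pt) (hd0 : 0 ≤ p 0) (hd1 : p 0 ≤ 1) (hc0 : 0 ≤ p 1) (hc1 : p 1 ≤ 1)
    (hf1 : p 2 = 0 ∨ p 2 = 1) (hf2 : p 3 = 0 ∨ p 3 = 1) : ∃ idx : Idx, p ∈ B idx := by
  obtain ⟨b1, hb1⟩ := pt_of hf1
  obtain ⟨b2, hb2⟩ := pt_of hf2
  have s1 := pt_in_quarter b1
  have s2 := pt_in_quarter b2
  obtain ⟨s11, s12⟩ := s1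
  obtain ⟨s21, s22⟩ := s2
  by_cases hc : 1/4 ≤ p 1 ∧ p 1 ≤ 3/4
  · obtain ⟨hcm1, hcm2⟩ := hc
    obtain ⟨h, hh1, hh2⟩ := half_of hd0 hd1
    refine ⟨.inr (.inl (0, b1, b2, h)), mem_B_of _ ?_ ?_ ?_ ?_⟩ <;>
      · simp only [bx, bd, centX, centD, edgeX, edgeD, Matrix.cons_val_zero, Matrix.cons_val_one, Matrix.head_cons, Matrix.cons_val_two, Matrix.cons_val_three, Matrix.tail_cons, vec6_four, vec6_five, add_zero]
        refine ⟨by linarith, by linarith⟩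
  · by_cases hdm : 1/4 ≤ p 0 ∧ p 0 ≤ 3/4
    · obtain ⟨hdm1, hdm2⟩ := hdm
      obtain ⟨qc, hqc1, hqc2⟩ := quarter_of hc0 hc1 hc
      refine ⟨.inr (.inr (0, qc, b1, b2)), mem_B_of _ ?_ ?_ ?_ ?_⟩ <;>
      · simp only [bx, bd, centX, centD, edgeX, edgeD, Matrix.cons_val_zero, Matrix.cons_val_one, Matrix.head_cons, Matrix.cons_val_two, Matrix.cons_val_three, Matrix.tail_cons, vec6_four, vec6_five, add_zero]
        refine ⟨by linarith, by linarith⟩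
    · obtain ⟨qc, hqc1, hqc2⟩ := quarter_of hc0 hc1 hc
      obtain ⟨qd, hqd1, hqd2⟩ := quarter_of hd0 hd1 hdm
      refine ⟨.inl ![qd, qc, b1, b2], mem_B_of _ ?_ ?_ ?_ ?_⟩ <;>
      · simp only [bx, bd, centX, centD, edgeX, edgeD, Matrix.cons_val_zero, Matrix.cons_val_one, Matrix.head_cons, Matrix.cons_val_two, Matrix.cons_val_three, Matrix.tail_cons, vec6_four, vec6_five, add_zero]
        refine ⟨by linarith, by linarith⟩

lemma cover03 (p : Pt) (hd0 : 0 ≤ p 1) (hd1 : p 1 ≤ 1) (hc0 : 0 ≤ p 2) (hc1 : p 2 ≤ 1)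
    (hf1 : p 0 = 0 ∨ p 0 = 1) (hf2 : p 3 = 0 ∨ p 3 = 1) : ∃ idx : Idx, p ∈ B idx := by
  obtain ⟨b1, hb1⟩ := pt_of hf1
  obtain ⟨b2, hb2⟩ := pt_of hf2
  have s1 := pt_in_quarter b1
  have s2 := pt_in_quarter b2
  obtain ⟨s11, s12⟩ := s1
  obtain ⟨s21, s22⟩ := s2
  by_cases hc : 1/4 ≤ p 2 ∧ p 2 ≤ 3/4
  · obtain ⟨hcm1, hcm2⟩ := hc
    obtain ⟨h, hh1, hh2⟩ := half_of hd0 hd1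
    refine ⟨.inr (.inl (1, b1, b2, h)), mem_B_of _ ?_ ?_ ?_ ?_⟩ <;>
      · simp only [bx, bd, centX, centD, edgeX, edgeD, Matrix.cons_val_zero, Matrix.cons_val_one, Matrix.head_cons, Matrix.cons_val_two, Matrix.cons_val_three, Matrix.tail_cons, vec6_four, vec6_five, add_zero]
        refine ⟨by linarith, by linarith⟩
  · by_cases hdm : 1/4 ≤ p 1 ∧ p 1 ≤ 3/4
    · obtain ⟨hdm1, hdm2⟩ := hdm
      obtain ⟨qc, hqc1, hqc2⟩ := quarter_of hc0 hc1 hc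
      refine ⟨.inr (.inr (1, b1, qc, b2)), mem_B_of _ ?_ ?_ ?_ ?_⟩ <;>
      · simp only [bx, bd, centX, centD, edgeX, edgeD, Matrix.cons_val_zero, Matrix.cons_val_one, Matrix.head_cons, Matrix.cons_val_two, Matrix.cons_val_three, Matrix.tail_cons, vec6_four, vec6_five, add_zero]
        refine ⟨by linarith, by linarith⟩
    · obtain ⟨qc, hqc1, hqc2⟩ := quarter_of hc0 hc1 hc
      obtain ⟨qd, hqd1, hqd2⟩ := quarter_of hd0 hd1 hdm
      refine ⟨.inl ![b1, qd, qc, b2], mem_B_of _ ?_ ?_ ?_ ?_⟩ <;>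
      · simp only [bx, bd, centX, centD, edgeX, edgeD, Matrix.cons_val_zero, Matrix.cons_val_one, Matrix.head_cons, Matrix.cons_val_two, Matrix.cons_val_three, Matrix.tail_cons, vec6_four, vec6_five, add_zero]
        refine ⟨by linarith, by linarith⟩

lemma cover13 (p : Pt) (hd0 : 0 ≤ p 2) (hd1 : p 2 ≤ 1) (hc0 : 0 ≤ p 0) (hc1 : p 0 ≤ 1)
    (hf1 : p 1 = 0 ∨ p 1 = 1) (hf2 : p 3 = 0 ∨ p 3 = 1) : ∃ idx : Idx, p ∈ B idx := by
  obtain ⟨b1, hb1⟩ := pt_of hf1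
  obtain ⟨b2, hb2⟩ := pt_of hf2
  have s1 := pt_in_quarter b1
  have s2 := pt_in_quarter b2
  obtain ⟨s11, s12⟩ := s1
  obtain ⟨s21, s22⟩ := s2
  by_cases hc : 1/4 ≤ p 0 ∧ p 0 ≤ 3/4
  · obtain ⟨hcm1, hcm2⟩ := hc
    obtain ⟨h, hh1, hh2⟩ := half_of hd0 hd1
    refine ⟨.inr (.inl (2, b1, b2, h)), mem_B_of _ ?_ ?_ ?_ ?_⟩ <;>
      · simp only [bx, bd, centX, centD, edgeX, edgeD, Matrix.cons_val_zero, Matrix.cons_val_one, Matrix.head_cons, Matrix.cons_val_two, Matrix.cons_val_three, Matrix.tail_cons, vec6_four, vec6_five, add_zero]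
        refine ⟨by linarith, by linarith⟩
  · by_cases hdm : 1/4 ≤ p 2 ∧ p 2 ≤ 3/4
    · obtain ⟨hdm1, hdm2⟩ := hdm
      obtain ⟨qc, hqc1, hqc2⟩ := quarter_of hc0 hc1 hc
      refine ⟨.inr (.inr (2, qc, b1, b2)), mem_B_of _ ?_ ?_ ?_ ?_⟩ <;>
      · simp only [bx, bd, centX, centD, edgeX, edgeD, Matrix.cons_val_zero, Matrix.cons_val_one, Matrix.head_cons, Matrix.cons_val_two, Matrix.cons_val_three, Matrix.tail_cons, vec6_four, vec6_five, add_zero]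
        refine ⟨by linarith, by linarith⟩
    · obtain ⟨qc, hqc1, hqc2⟩ := quarter_of hc0 hc1 hc
      obtain ⟨qd, hqd1, hqd2⟩ := quarter_of hd0 hd1 hdm
      refine ⟨.inl ![qc, b1, qd, b2], mem_B_of _ ?_ ?_ ?_ ?_⟩ <;>
      · simp only [bx, bd, centX, centD, edgeX, edgeD, Matrix.cons_val_zero, Matrix.cons_val_one, Matrix.head_cons, Matrix.cons_val_two, Matrix.cons_val_three, Matrix.tail_cons, vec6_four, vec6_five, add_zero]
        refine ⟨by linarith, by linarith⟩

lemma cover12 (p : Pt) (hd0 : 0 ≤ p 0) (hd1 : p 0 ≤ 1) (hc0 : 0 ≤ p 3) (hc1 : p 3 ≤ 1)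
    (hf1 : p 1 = 0 ∨ p 1 = 1) (hf2 : p 2 = 0 ∨ p 2 = 1) : ∃ idx : Idx, p ∈ B idx := by
  obtain ⟨b1, hb1⟩ := pt_of hf1
  obtain ⟨b2, hb2⟩ := pt_of hf2
  have s1 := pt_in_quarter b1
  have s2 := pt_in_quarter b2
  obtain ⟨s11, s12⟩ := s1
  obtain ⟨s21, s22⟩ := s2
  by_cases hc : 1/4 ≤ p 3 ∧ p 3 ≤ 3/4
  · obtain ⟨hcm1, hcm2⟩ := hc
    obtain ⟨h, hh1, hh2⟩ := half_of hd0 hd1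
    refine ⟨.inr (.inl (3, b1, b2, h)), mem_B_of _ ?_ ?_ ?_ ?_⟩ <;>
      · simp only [bx, bd, centX, centD, edgeX, edgeD, Matrix.cons_val_zero, Matrix.cons_val_one, Matrix.head_cons, Matrix.cons_val_two, Matrix.cons_val_three, Matrix.tail_cons, vec6_four, vec6_five, add_zero]
        refine ⟨by linarith, by linarith⟩
  · by_cases hdm : 1/4 ≤ p 0 ∧ p 0 ≤ 3/4
    · obtain ⟨hdm1, hdm2⟩ := hdm
      obtain ⟨qc, hqc1, hqc2⟩ := quarter_of hc0 hc1 hc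
      refine ⟨.inr (.inr (0, b1, b2, qc)), mem_B_of _ ?_ ?_ ?_ ?_⟩ <;>
      · simp only [bx, bd, centX, centD, edgeX, edgeD, Matrix.cons_val_zero, Matrix.cons_val_one, Matrix.head_cons, Matrix.cons_val_two, Matrix.cons_val_three, Matrix.tail_cons, vec6_four, vec6_five, add_zero]
        refine ⟨by linarith, by linarith⟩
    · obtain ⟨qc, hqc1, hqc2⟩ := quarter_of hc0 hc1 hc
      obtain ⟨qd, hqd1, hqd2⟩ := quarter_of hd0 hd1 hdm
      refine ⟨.inl ![qd, b1, b2, qc], mem_B_of _ ?_ ?_ ?_ ?_⟩ <;>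
      · simp only [bx, bd, centX, centD, edgeX, edgeD, Matrix.cons_val_zero, Matrix.cons_val_one, Matrix.head_cons, Matrix.cons_val_two, Matrix.cons_val_three, Matrix.tail_cons, vec6_four, vec6_five, add_zero]
        refine ⟨by linarith, by linarith⟩

lemma cover02 (p : Pt) (hd0 : 0 ≤ p 1) (hd1 : p 1 ≤ 1) (hc0 : 0 ≤ p 3) (hc1 : p 3 ≤ 1)
    (hf1 : p 0 = 0 ∨ p 0 = 1) (hf2 : p 2 = 0 ∨ p 2 = 1) : ∃ idx : Idx, p ∈ B idx := by
  obtain ⟨b1, hb1⟩ := pt_of hf1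
  obtain ⟨b2, hb2⟩ := pt_of hf2
  have s1 := pt_in_quarter b1
  have s2 := pt_in_quarter b2
  obtain ⟨s11, s12⟩ := s1
  obtain ⟨s21, s22⟩ := s2
  by_cases hc : 1/4 ≤ p 3 ∧ p 3 ≤ 3/4
  · obtain ⟨hcm1, hcm2⟩ := hc
    obtain ⟨h, hh1, hh2⟩ := half_of hd0 hd1
    refine ⟨.inr (.inl (4, b1, b2, h)), mem_B_of _ ?_ ?_ ?_ ?_⟩ <;>
      · simp only [bx, bd, centX, centD, edgeX, edgeD, Matrix.cons_val_zero, Matrix.cons_val_one, Matrix.head_cons, Matrix.cons_val_two, Matrix.cons_val_three, Matrix.tail_cons, vec6_four, vec6_five, add_zero]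
        refine ⟨by linarith, by linarith⟩
  · by_cases hdm : 1/4 ≤ p 1 ∧ p 1 ≤ 3/4
    · obtain ⟨hdm1, hdm2⟩ := hdm
      obtain ⟨qc, hqc1, hqc2⟩ := quarter_of hc0 hc1 hc
      refine ⟨.inr (.inr (1, b1, b2, qc)), mem_B_of _ ?_ ?_ ?_ ?_⟩ <;>
      · simp only [bx, bd, centX, centD, edgeX, edgeD, Matrix.cons_val_zero, Matrix.cons_val_one, Matrix.head_cons, Matrix.cons_val_two, Matrix.cons_val_three, Matrix.tail_cons, vec6_four, vec6_five, add_zero]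
        refine ⟨by linarith, by linarith⟩
    · obtain ⟨qc, hqc1, hqc2⟩ := quarter_of hc0 hc1 hc
      obtain ⟨qd, hqd1, hqd2⟩ := quarter_of hd0 hd1 hdm
      refine ⟨.inl ![b1, qd, b2, qc], mem_B_of _ ?_ ?_ ?_ ?_⟩ <;>
      · simp only [bx, bd, centX, centD, edgeX, edgeD, Matrix.cons_val_zero, Matrix.cons_val_one, Matrix.head_cons, Matrix.cons_val_two, Matrix.cons_val_three, Matrix.tail_cons, vec6_four, vec6_five, add_zero]
        refine ⟨by linarith, by linarith⟩

lemma cover01 (p : Pt) (hd0 : 0 ≤ p 2) (hd1 : p 2 ≤ 1) (hc0 : 0 ≤ p 3) (hc1 : p 3 ≤ 1)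
    (hf1 : p 0 = 0 ∨ p 0 = 1) (hf2 : p 1 = 0 ∨ p 1 = 1) : ∃ idx : Idx, p ∈ B idx := by
  obtain ⟨b1, hb1⟩ := pt_of hf1
  obtain ⟨b2, hb2⟩ := pt_of hf2
  have s1 := pt_in_quarter b1
  have s2 := pt_in_quarter b2
  obtain ⟨s11, s12⟩ := s1
  obtain ⟨s21, s22⟩ := s2
  by_cases hc : 1/4 ≤ p 3 ∧ p 3 ≤ 3/4
  · obtain ⟨hcm1, hcm2⟩ := hc
    obtain ⟨h, hh1, hh2⟩ := half_of hd0 hd1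
    refine ⟨.inr (.inl (5, b1, b2, h)), mem_B_of _ ?_ ?_ ?_ ?_⟩ <;>
      · simp only [bx, bd, centX, centD, edgeX, edgeD, Matrix.cons_val_zero, Matrix.cons_val_one, Matrix.head_cons, Matrix.cons_val_two, Matrix.cons_val_three, Matrix.tail_cons, vec6_four, vec6_five, add_zero]
        refine ⟨by linarith, by linarith⟩
  · by_cases hdm : 1/4 ≤ p 2 ∧ p 2 ≤ 3/4
    · obtain ⟨hdm1, hdm2⟩ := hdm
      obtain ⟨qc, hqc1, hqc2⟩ := quarter_of hc0 hc1 hc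
      refine ⟨.inr (.inr (2, b1, b2, qc)), mem_B_of _ ?_ ?_ ?_ ?_⟩ <;>
      · simp only [bx, bd, centX, centD, edgeX, edgeD, Matrix.cons_val_zero, Matrix.cons_val_one, Matrix.head_cons, Matrix.cons_val_two, Matrix.cons_val_three, Matrix.tail_cons, vec6_four, vec6_five, add_zero]
        refine ⟨by linarith, by linarith⟩
    · obtain ⟨qc, hqc1, hqc2⟩ := quarter_of hc0 hc1 hc
      obtain ⟨qd, hqd1, hqd2⟩ := quarter_of hd0 hd1 hdm
      refine ⟨.inl ![b1, b2, qd, qc], mem_B_of _ ?_ ?_ ?_ ?_⟩ <;>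
      · simp only [bx, bd, centX, centD, edgeX, edgeD, Matrix.cons_val_zero, Matrix.cons_val_one, Matrix.head_cons, Matrix.cons_val_two, Matrix.cons_val_three, Matrix.tail_cons, vec6_four, vec6_five, add_zero]
        refine ⟨by linarith, by linarith⟩

lemma B_interiors_disjoint (a b : Idx) (hab : a ≠ b) :
    interior (B a) ∩ interior (B b) = ∅ := by
  rcases a with v | w
  · rcases b with v' | w'
    · have hvv : v ≠ v' := fun h => hab (by rw [h])
      apply Set.eq_empty_of_subset_empty
      calc interior (B (.inl v)) ∩ interior (B (.inl v'))
          ⊆ B (.inl v) ∩ B (.inl v') :=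
            Set.inter_subset_inter interior_subset interior_subset
        _ = ∅ := vert_disjoint v v' hvv
    · rw [interior_B_inr w', Set.inter_empty]
  · rw [interior_B_inr w, Set.empty_inter]

end Skel88

open Skel88

theorem skeleton_cover_88_nonoverlapping :
    ∃ P : Fin 88 → Set (EuclideanSpace ℝ (Fin 4)),
      (∀ i, IsBoxPStar 4 (P i)) ∧
      skeletonTwo 4 ⊆ ⋃ i, P i ∧
      ∀ i j, i ≠ j → interior (P i) ∩ interior (P j) = ∅ := by
  classical
  let e : Idx ≃ Fin 88 := Fintype.equivFinOfCardEq (by decide)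
  refine ⟨fun i => B (e.symm i), fun i => isBoxPStar_B _, ?_, ?_⟩
  · rintro p ⟨hb, i, j, hij, hi, hj⟩
    have c00 : 0 ≤ p 0 := (hb 0).1
    have c01 : p 0 ≤ 1 := (hb 0).2
    have c10 : 0 ≤ p 1 := (hb 1).1
    have c11 : p 1 ≤ 1 := (hb 1).2
    have c20 : 0 ≤ p 2 := (hb 2).1
    have c21 : p 2 ≤ 1 := (hb 2).2
    have c30 : 0 ≤ p 3 := (hb 3).1
    have c31 : p 3 ≤ 1 := (hb 3).2
    have hex : ∃ idx : Idx, p ∈ B idx := by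
      fin_cases i <;> fin_cases j <;>
        first
          | exact absurd rfl hij
          | exact cover01 p c20 c21 c30 c31 hi hj
          | exact cover01 p c20 c21 c30 c31 hj hi
          | exact cover02 p c10 c11 c30 c31 hi hj
          | exact cover02 p c10 c11 c30 c31 hj hi
          | exact cover03 p c10 c11 c20 c21 hi hj
          | exact cover03 p c10 c11 c20 c21 hj hi
          | exact cover12 p c00 c01 c30 c31 hi hj
          | exact cover12 p c00 c01 c30 c31 hj hi
          | exact cover13 p c20 c21 c00 c01 hi hj
          | exact cover13 p c20 c21 c00 c01 hj hi
          | exact cover23 p c00 c01 c10 c11 hi hj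
          | exact cover23 p c00 c01 c10 c11 hj hi
    obtain ⟨idx, hidx⟩ := hex
    exact Set.mem_iUnion.2 ⟨e idx, by simpa using hidx⟩
  · intro i j hij
    exact B_interiors_disjoint _ _ (e.symm.injective.ne hij)
end

section
/- For every integer n ≥ 3, the (n−2)-skeleton B_{n−2,n} of the unit cube [0,1]ⁿ can be covered by 2n(n−1)(n−2)^{n−2} boxes belonging to 𝒫ₙ*. -/
open scoped BigOperators

noncomputable section SkeletonAux

/-- value of a boolean as a real number -/
def bval (b : Bool) : ℝ := if b then 1 else 0

lemma card_ne_pair {n : ℕ} {i j : Fin n} (hij : j ≠ i) :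
    Fintype.card {k : Fin n // k ≠ i ∧ k ≠ j} = n - 2 := by
  rw [Fintype.card_subtype]
  have h : (Finset.univ.filter fun k : Fin n => k ≠ i ∧ k ≠ j)
      = Finset.univ \ {i, j} := by
    ext k; simp [and_comm]
  rw [h, Finset.card_sdiff_of_subset (by simp), Finset.card_univ, Fintype.card_fin,
    Finset.card_pair (Ne.symm hij)]

def coordEquiv {n : ℕ} (i j : Fin n) (hij : j ≠ i) :
    {k : Fin n // k ≠ i ∧ k ≠ j} ≃ Fin (n - 2) :=
  Fintype.equivFinOfCardEq (card_ne_pair hij)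

abbrev IndexT (n : ℕ) :=
  (Σ i : Fin n, {j : Fin n // j ≠ i}) × Bool × (Fin (n - 2) → Fin (n - 2))

def dcoord {n : ℕ} (t : IndexT n) (k : Fin n) : ℝ :=
  if k = t.1.1 ∨ k = (t.1.2 : Fin n) then 0 else 1 / ((n : ℝ) - 2)

def xcoord {n : ℕ} (t : IndexT n) (k : Fin n) : ℝ :=
  if h1 : k = t.1.1 then bval t.2.1
  else if h2 : k = (t.1.2 : Fin n) then
    bval (if t.1.1 < (t.1.2 : Fin n) then !t.2.1 else t.2.1)
  else ((t.2.2 (coordEquiv t.1.1 (t.1.2 : Fin n) t.1.2.2 ⟨k, h1, h2⟩)).val : ℝ) / ((n : ℝ) - 2)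

def boxOf {n : ℕ} (t : IndexT n) : Set (EuclideanSpace ℝ (Fin n)) :=
  {p : EuclideanSpace ℝ (Fin n) | ∀ k, p k ∈ Set.Icc (xcoord t k) (xcoord t k + dcoord t k)}

lemma card_indexT (n : ℕ) :
    Fintype.card (IndexT n) = 2 * n * (n - 1) * (n - 2) ^ (n - 2) := by
  have h1 : Fintype.card (Σ i : Fin n, {j : Fin n // j ≠ i}) = n * (n - 1) := by
    rw [Fintype.card_sigma]
    have h2 : ∀ i : Fin n, Fintype.card {j : Fin n // j ≠ i} = n - 1 := by
      intro i
      rw [Fintype.card_subtype_compl, Fintype.card_fin, Fintype.card_subtype_eq]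
    simp only [h2]
    rw [Finset.sum_const, Finset.card_univ, Fintype.card_fin, smul_eq_mul]
  rw [Fintype.card_prod, Fintype.card_prod, h1, Fintype.card_bool, Fintype.card_fun,
    Fintype.card_fin]
  ring

lemma choose_uwb {n : ℕ} {i j : Fin n} (hij : i ≠ j) {p : Fin n → ℝ}
    (ha : p i = 0 ∨ p i = 1) (hc : p j = 0 ∨ p j = 1) :
    ∃ u w : Fin n, ∃ b : Bool, w ≠ u ∧ (∀ k : Fin n, k ≠ u → k ≠ w → k ≠ i ∧ k ≠ j) ∧
      p u = bval b ∧ p w = bval (if u < w then !b else b) := by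
  rcases hij.lt_or_gt with h | h <;> rcases ha with ha | ha <;> rcases hc with hc | hc
  · exact ⟨j, i, false, hij, fun k h1 h2 => ⟨h2, h1⟩,
      by simp [bval, hc], by simp [bval, ha, not_lt_of_gt h]⟩
  · exact ⟨i, j, false, hij.symm, fun k h1 h2 => ⟨h1, h2⟩,
      by simp [bval, ha], by simp [bval, hc, h]⟩
  · exact ⟨i, j, true, hij.symm, fun k h1 h2 => ⟨h1, h2⟩,
      by simp [bval, ha], by simp [bval, hc, h]⟩
  · exact ⟨j, i, true, hij, fun k h1 h2 => ⟨h2, h1⟩,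
      by simp [bval, hc], by simp [bval, ha, not_lt_of_gt h]⟩
  · exact ⟨i, j, false, hij.symm, fun k h1 h2 => ⟨h1, h2⟩,
      by simp [bval, ha], by simp [bval, hc, not_lt_of_gt h]⟩
  · exact ⟨j, i, true, hij, fun k h1 h2 => ⟨h2, h1⟩,
      by simp [bval, hc], by simp [bval, ha, h]⟩
  · exact ⟨j, i, false, hij, fun k h1 h2 => ⟨h2, h1⟩,
      by simp [bval, hc], by simp [bval, ha, h]⟩
  · exact ⟨i, j, true, hij.symm, fun k h1 h2 => ⟨h1, h2⟩,
      by simp [bval, ha], by simp [bval, hc, not_lt_of_gt h]⟩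

end SkeletonAux

theorem skeleton_cover_star (n : ℕ) (hn : 3 ≤ n) :
    ∃ P : Fin (2 * n * (n - 1) * (n - 2) ^ (n - 2)) → Set (EuclideanSpace ℝ (Fin n)),
      (∀ i, IsBoxPStar n (P i)) ∧ skeletonTwo n ⊆ ⋃ i, P i := by
  classical
  have hn' : (3 : ℝ) ≤ (n : ℝ) := by exact_mod_cast hn
  have hc2 : (0 : ℝ) < (n : ℝ) - 2 := by linarith
  have hcast : ((n - 2 : ℕ) : ℝ) = (n : ℝ) - 2 := by
    push_cast [Nat.cast_sub (by omega : 2 ≤ n)]; ring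
  let e : IndexT n ≃ Fin (2 * n * (n - 1) * (n - 2) ^ (n - 2)) :=
    Fintype.equivFinOfCardEq (card_indexT n)
  refine ⟨fun m => boxOf (e.symm m), ?_, ?_⟩
  · intro m
    refine ⟨xcoord (e.symm m), dcoord (e.symm m), ?_, ?_, rfl⟩
    · intro k
      unfold dcoord
      split
      · exact le_refl 0
      · positivity
    · have hfilter : (Finset.univ.filter fun k : Fin n =>
          ¬(k = (e.symm m).1.1 ∨ k = ((e.symm m).1.2 : Fin n))).card = n - 2 := by
        have h := card_ne_pair (e.symm m).1.2.2
        rw [Fintype.card_subtype] at h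
        have h2 : (Finset.univ.filter fun k : Fin n =>
            ¬(k = (e.symm m).1.1 ∨ k = ((e.symm m).1.2 : Fin n)))
            = Finset.univ.filter fun k : Fin n =>
              k ≠ (e.symm m).1.1 ∧ k ≠ ((e.symm m).1.2 : Fin n) := by
          ext k; simp [not_or]
        rw [h2, h]
      unfold dcoord
      rw [Finset.sum_ite, Finset.sum_const, Finset.sum_const, hfilter, smul_zero, zero_add,
        nsmul_eq_mul, hcast]
      rw [mul_one_div, div_self (ne_of_gt hc2)]
  · rintro p ⟨hb, i, j, hij, hvi, hvj⟩
    obtain ⟨u, w, b, hwu, hcomp, hu, hw⟩ := choose_uwb hij hvi hvj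
    have hmlt : ∀ y : ℝ, min ⌊y * ((n : ℝ) - 2)⌋₊ (n - 3) < n - 2 :=
      fun y => lt_of_le_of_lt (min_le_right _ _) (by omega)
    set E := coordEquiv u w hwu with hE
    let f : Fin (n - 2) → Fin (n - 2) := fun s =>
      ⟨min ⌊p ((E.symm s : {k : Fin n // k ≠ u ∧ k ≠ w}) : Fin n) * ((n : ℝ) - 2)⌋₊ (n - 3),
        hmlt _⟩
    refine Set.mem_iUnion.mpr ⟨e ⟨⟨u, ⟨w, hwu⟩⟩, b, f⟩, ?_⟩
    show p ∈ boxOf (e.symm (e _))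
    rw [Equiv.symm_apply_apply]
    intro k
    by_cases h1 : k = u
    · subst h1
      have hx : xcoord (⟨⟨k, ⟨w, hwu⟩⟩, b, f⟩ : IndexT n) k = bval b := by
        unfold xcoord; rw [dif_pos rfl]
      have hd : dcoord (⟨⟨k, ⟨w, hwu⟩⟩, b, f⟩ : IndexT n) k = 0 := by
        unfold dcoord; rw [if_pos (Or.inl rfl)]
      rw [hx, hd, add_zero, hu]
      exact ⟨le_refl _, le_refl _⟩
    · by_cases h2 : k = w
      · subst h2
        have hx : xcoord (⟨⟨u, ⟨k, hwu⟩⟩, b, f⟩ : IndexT n) k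
            = bval (if u < k then !b else b) := by
          unfold xcoord; rw [dif_neg h1, dif_pos rfl]
        have hd : dcoord (⟨⟨u, ⟨k, hwu⟩⟩, b, f⟩ : IndexT n) k = 0 := by
          unfold dcoord; rw [if_pos (Or.inr rfl)]
        rw [hx, hd, add_zero, hw]
        exact ⟨le_refl _, le_refl _⟩
      · have hx : xcoord (⟨⟨u, ⟨w, hwu⟩⟩, b, f⟩ : IndexT n) k
            = ((f (E ⟨k, h1, h2⟩)).val : ℝ) / ((n : ℝ) - 2) := by
          unfold xcoord; rw [dif_neg h1, dif_neg h2]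
        have hd : dcoord (⟨⟨u, ⟨w, hwu⟩⟩, b, f⟩ : IndexT n) k = 1 / ((n : ℝ) - 2) := by
          unfold dcoord; rw [if_neg (by tauto)]
        rw [hx, hd]
        have hval : (f (E ⟨k, h1, h2⟩)).val = min ⌊p k * ((n : ℝ) - 2)⌋₊ (n - 3) := by
          show min ⌊p ((E.symm (E ⟨k, h1, h2⟩) : {k : Fin n // k ≠ u ∧ k ≠ w}) : Fin n)
              * ((n : ℝ) - 2)⌋₊ (n - 3) = _
          rw [Equiv.symm_apply_apply]
        rw [hval]
        obtain ⟨hy0, hy1⟩ := hb k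
        set y := p k
        set m : ℕ := min ⌊y * ((n : ℝ) - 2)⌋₊ (n - 3) with hm
        constructor
        · rw [div_le_iff₀ hc2]
          calc (m : ℝ) ≤ (⌊y * ((n : ℝ) - 2)⌋₊ : ℝ) := Nat.cast_le.mpr (min_le_left _ _)
            _ ≤ y * ((n : ℝ) - 2) := Nat.floor_le (by positivity)
        · rw [← add_div, le_div_iff₀ hc2]
          have hub : y * ((n : ℝ) - 2) ≤ (m : ℝ) + 1 := by
            rcases le_or_gt ⌊y * ((n : ℝ) - 2)⌋₊ (n - 3) with hle | hlt
            · rw [hm, min_eq_left hle]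
              exact le_of_lt (Nat.lt_floor_add_one _)
            · rw [hm, min_eq_right (le_of_lt hlt)]
              have h3 : ((n - 3 : ℕ) : ℝ) = (n : ℝ) - 3 := by
                push_cast [Nat.cast_sub (by omega : 3 ≤ n)]; ring
              rw [h3]
              nlinarith
          linarith [hub]
end
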